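/- Let F be a saturated formation and U an F-normaliser of the soluble Lie algebra L. For any ideal A of L, (U + A)/A is an F-normaliser of L/A. -/

import Mathlib

universe u
section Formation

variable (𝕜 : Type u) [Field 𝕜]

/-- A class of Lie algebras over `𝕜`. -/
def LieClass : Type (u + 1) := ∀ (M : Type u) [LieRing M] [LieAlgebra 𝕜 M], Prop

variable (L : Type u) [LieRing L] [LieAlgebra 𝕜 L]

/-- The quotient map `L → L ⧸ I` as a morphism of Lie algebras. -/
def lieQuotMk (I : LieIdeal 𝕜 L) : L →ₗ⁅𝕜⁆ L ⧸ I :=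
  { (LieSubmodule.Quotient.mk' I).toLinearMap with map_lie' := fun {_ _} => rfl }

/-- The core of a subalgebra: the largest ideal of `L` contained in it. -/
def lieCore (M : LieSubalgebra 𝕜 L) : LieIdeal 𝕜 L :=
  sSup {I : LieIdeal 𝕜 L | ∀ x ∈ I, x ∈ M}

/-- The nil radical: the largest nilpotent ideal (expressed as the supremum of all
nilpotent ideals, which coincides with the largest one in finite dimensions). -/
def lieNilradical : LieIdeal 𝕜 L :=
  sSup {I : LieIdeal 𝕜 L | LieRing.IsNilpotent I}

/-- The Frattini ideal: the largest ideal contained in every maximal subalgebra. -/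
def lieFrattiniIdeal : LieIdeal 𝕜 L :=
  sSup {I : LieIdeal 𝕜 L | ∀ M : LieSubalgebra 𝕜 L, IsCoatom M → ∀ x ∈ I, x ∈ M}

/-- A saturated formation of (finite-dimensional soluble) Lie algebras over `𝕜`:  a class of
soluble Lie algebras, closed under isomorphisms, quotients and subdirect sums (finite
subdirect products), such that `L ⧸ Φ(L) ∈ 𝔉` implies `L ∈ 𝔉`. -/
structure IsSaturatedFormation (𝔉 : LieClass 𝕜) : Prop where
  solvable : ∀ (M : Type u) [LieRing M] [LieAlgebra 𝕜 M], 𝔉 M → LieAlgebra.IsSolvable M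
  finiteDimensional : ∀ (M : Type u) [LieRing M] [LieAlgebra 𝕜 M], 𝔉 M → FiniteDimensional 𝕜 M
  iso_closed : ∀ (M N : Type u) [LieRing M] [LieAlgebra 𝕜 M] [LieRing N] [LieAlgebra 𝕜 N],
    (M ≃ₗ⁅𝕜⁆ N) → 𝔉 M → 𝔉 N
  quotient_closed : ∀ (M : Type u) [LieRing M] [LieAlgebra 𝕜 M] (I : LieIdeal 𝕜 M),
    𝔉 M → 𝔉 (M ⧸ I)
  subdirect_closed : ∀ (M : Type u) [LieRing M] [LieAlgebra 𝕜 M] (I J : LieIdeal 𝕜 M),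
    I ⊓ J = ⊥ → 𝔉 (M ⧸ I) → 𝔉 (M ⧸ J) → 𝔉 M
  saturated : ∀ (M : Type u) [LieRing M] [LieAlgebra 𝕜 M] [FiniteDimensional 𝕜 M]
    [LieAlgebra.IsSolvable M], 𝔉 (M ⧸ lieFrattiniIdeal 𝕜 M) → 𝔉 M

variable (𝔉 : LieClass 𝕜)

/-- A maximal subalgebra `M` of `L` is `𝔉`-normal if `L ⧸ core_L(M) ∈ 𝔉`. -/
def IsFNormalMaximal (M : LieSubalgebra 𝕜 L) : Prop :=
  IsCoatom M ∧ 𝔉 (L ⧸ lieCore 𝕜 L M)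

/-- A maximal subalgebra `M` of `L` is `𝔉`-critical if it is `𝔉`-abnormal (that is,
`L ⧸ core_L(M) ∉ 𝔉`) and `M + N(L) = L` where `N(L)` is the nil radical. -/
def IsFCritical (M : LieSubalgebra 𝕜 L) : Prop :=
  IsCoatom M ∧ ¬ 𝔉 (L ⧸ lieCore 𝕜 L M) ∧
    M ⊔ (lieNilradical 𝕜 L : LieSubalgebra 𝕜 L) = ⊤

/-- `V` is an `𝔉`-normaliser of `L` if `V ∈ 𝔉` and there is a chain
`L = M₀ > M₁ > ... > Mₙ = V` with each `Mᵢ` `𝔉`-critical in `Mᵢ₋₁`. -/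
def IsFNormaliser (V : LieSubalgebra 𝕜 L) : Prop :=
  𝔉 V ∧ ∃ (n : ℕ) (C : Fin (n + 1) → LieSubalgebra 𝕜 L),
    C 0 = ⊤ ∧ C (Fin.last n) = V ∧
      ∀ i : Fin n, C i.succ ≤ C i.castSucc ∧
        IsFCritical 𝕜 (C i.castSucc) 𝔉 ((C i.succ).comap (C i.castSucc).incl)

end Formation
section Aux

variable {𝕜 : Type u} [Field 𝕜]
variable {P : Type u} [LieRing P] [LieAlgebra 𝕜 P]
variable {Q : Type u} [LieRing Q] [LieAlgebra 𝕜 Q]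

/-- Restrict the codomain of a Lie algebra morphism to a subalgebra containing the image. -/
def LieHom.codRestrict' (f : P →ₗ⁅𝕜⁆ Q) (K : LieSubalgebra 𝕜 Q) (h : ∀ x, f x ∈ K) :
    P →ₗ⁅𝕜⁆ K :=
  { (f : P →ₗ[𝕜] Q).codRestrict K.toSubmodule h with
    map_lie' := fun {x y} => Subtype.ext (f.map_lie _ _) }

@[simp] lemma LieHom.codRestrict'_apply (f : P →ₗ⁅𝕜⁆ Q) (K : LieSubalgebra 𝕜 Q)
    (h : ∀ x, f x ∈ K) (x : P) : ((f.codRestrict' K h) x : Q) = f x := rfl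

/-- A morphism of Lie algebras between ideal subtypes. -/
def LieHom.idealRestrict (f : P →ₗ⁅𝕜⁆ Q) (I : LieIdeal 𝕜 P) (J : LieIdeal 𝕜 Q)
    (h : ∀ x ∈ I, f x ∈ J) : I →ₗ⁅𝕜⁆ J :=
  { ((f : P →ₗ[𝕜] Q).comp (I : Submodule 𝕜 P).subtype).codRestrict
      (J : Submodule 𝕜 Q) (fun x => h x x.2) with
    map_lie' := fun {x y} => Subtype.ext (f.map_lie _ _) }

@[simp] lemma LieHom.idealRestrict_apply (f : P →ₗ⁅𝕜⁆ Q) (I : LieIdeal 𝕜 P) (J : LieIdeal 𝕜 Q)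
    (h : ∀ x ∈ I, f x ∈ J) (x : I) : ((f.idealRestrict I J h) x : Q) = f x := rfl

@[simp] lemma lieQuotMk_apply {L : Type u} [LieRing L] [LieAlgebra 𝕜 L] (A : LieIdeal 𝕜 L)
    (x : L) : lieQuotMk 𝕜 L A x = LieSubmodule.Quotient.mk (N := A) x := rfl

lemma lieQuotMk_surjective {L : Type u} [LieRing L] [LieAlgebra 𝕜 L] (A : LieIdeal 𝕜 L) :
    Function.Surjective (lieQuotMk 𝕜 L A) :=
  LieSubmodule.Quotient.surjective_mk' A

lemma lieQuotMk_eq_zero_iff {L : Type u} [LieRing L] [LieAlgebra 𝕜 L] (A : LieIdeal 𝕜 L)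
    (x : L) : lieQuotMk 𝕜 L A x = 0 ↔ x ∈ A :=
  LieSubmodule.Quotient.mk_eq_zero'

lemma LieSubalgebra.gc (f : P →ₗ⁅𝕜⁆ Q) :
    GaloisConnection (LieSubalgebra.map f) (LieSubalgebra.comap f) := fun _ _ =>
  LieSubalgebra.map_le_iff_le_comap

lemma LieSubalgebra.map_sup' (f : P →ₗ⁅𝕜⁆ Q) (K K' : LieSubalgebra 𝕜 P) :
    (K ⊔ K').map f = K.map f ⊔ K'.map f :=
  (LieSubalgebra.gc f).l_sup

lemma LieSubalgebra.map_top' (f : P →ₗ⁅𝕜⁆ Q) (hf : Function.Surjective f) :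
    (⊤ : LieSubalgebra 𝕜 P).map f = ⊤ := by
  ext y
  simp only [LieSubalgebra.mem_map, LieSubalgebra.mem_top, true_and, iff_true]
  exact hf y

/-- First isomorphism theorem for surjective morphisms. -/
noncomputable def LieHom.quotKerEquivOfSurjective (f : P →ₗ⁅𝕜⁆ Q)
    (hf : Function.Surjective f) : (P ⧸ f.ker) ≃ₗ⁅𝕜⁆ Q :=
  f.quotKerEquivRange.trans
    ((LieEquiv.ofEq _ _ (by rw [(LieHom.range_eq_top f).mpr hf])).trans LieSubalgebra.topEquiv)

lemma LieHom.quotKerEquivOfSurjective_mk (f : P →ₗ⁅𝕜⁆ Q) (hf : Function.Surjective f)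
    (x : P) : f.quotKerEquivOfSurjective hf (LieSubmodule.Quotient.mk (N := f.ker) x) = f x := by
  simp [LieHom.quotKerEquivOfSurjective, LieHom.quotKerEquivRange]
  rfl

end Aux
section Aux2

variable {𝕜 : Type u} [Field 𝕜]
variable {P : Type u} [LieRing P] [LieAlgebra 𝕜 P]
variable {Q : Type u} [LieRing Q] [LieAlgebra 𝕜 Q]

/-- Membership in the sup of a subalgebra and an ideal. -/
lemma mem_sup_ideal {K : LieSubalgebra 𝕜 P} {A : LieIdeal 𝕜 P} {x : P} :
    x ∈ K ⊔ (A : LieSubalgebra 𝕜 P) ↔ ∃ y ∈ K, ∃ z ∈ A, y + z = x := by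
  have hS : ∃ S : LieSubalgebra 𝕜 P,
      (S : Submodule 𝕜 P) = K.toSubmodule ⊔ (A : Submodule 𝕜 P) := by
    refine (Submodule.exists_lieSubalgebra_coe_eq_iff _).mpr ?_
    intro a b ha hb
    rw [Submodule.mem_sup] at ha hb ⊢
    obtain ⟨k, hk, i, hi, rfl⟩ := ha
    obtain ⟨k', hk', i', hi', rfl⟩ := hb
    refine ⟨⁅k, k'⁆, K.lie_mem hk hk', ⁅k, i'⁆ + ⁅i, k' + i'⁆, ?_, ?_⟩
    · have h1 : ⁅k, i'⁆ ∈ A := A.lie_mem hi'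
      have h2 : ⁅i, k' + i'⁆ ∈ A := by
        rw [← lie_skew]
        exact neg_mem (A.lie_mem hi)
      exact Submodule.add_mem _ h1 h2
    · simp only [add_lie, lie_add]; abel
  obtain ⟨S, hSc⟩ := hS
  have h1 : K ⊔ (A : LieSubalgebra 𝕜 P) = S := by
    apply le_antisymm
    · apply sup_le
      · intro x hx
        have : x ∈ (S : Submodule 𝕜 P) := by rw [hSc]; exact Submodule.mem_sup_left hx
        exact this
      · intro x hx
        have : x ∈ (S : Submodule 𝕜 P) := by
          rw [hSc]; exact Submodule.mem_sup_right hx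
        exact this
    · intro x hx
      have : x ∈ (S : Submodule 𝕜 P) := hx
      rw [hSc, Submodule.mem_sup] at this
      obtain ⟨y, hy, z, hz, rfl⟩ := this
      exact add_mem (le_sup_left (α := LieSubalgebra 𝕜 P) hy)
        ((le_sup_right : (A : LieSubalgebra 𝕜 P) ≤ _) hz)
  rw [h1]
  constructor
  · intro hx
    have : x ∈ (S : Submodule 𝕜 P) := hx
    rw [hSc, Submodule.mem_sup] at this
    obtain ⟨y, hy, z, hz, rfl⟩ := this
    exact ⟨y, hy, z, hz, rfl⟩
  · rintro ⟨y, hy, z, hz, rfl⟩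
    show y + z ∈ (S : Submodule 𝕜 P)
    rw [hSc]
    exact Submodule.add_mem _ (Submodule.mem_sup_left hy) (Submodule.mem_sup_right hz)

lemma map_ideal_coe_eq_bot (f : P →ₗ⁅𝕜⁆ Q) (A : LieIdeal 𝕜 P) (h : ∀ x ∈ A, f x = 0) :
    (A : LieSubalgebra 𝕜 P).map f = ⊥ := by
  rw [eq_bot_iff]
  rintro y hy
  rw [LieSubalgebra.mem_map] at hy
  obtain ⟨x, hx, rfl⟩ := hy
  rw [LieSubalgebra.mem_bot]
  exact h x hx

/-- The image of `U ⊔ A` in `L ⧸ A` is just the image of `U`. -/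
lemma map_sup_ideal_ker (f : P →ₗ⁅𝕜⁆ Q) (A : LieIdeal 𝕜 P) (h : ∀ x ∈ A, f x = 0)
    (U : LieSubalgebra 𝕜 P) :
    (U ⊔ (A : LieSubalgebra 𝕜 P)).map f = U.map f := by
  rw [LieSubalgebra.map_sup', map_ideal_coe_eq_bot f A h, sup_bot_eq]

lemma lieCore_le {M : LieSubalgebra 𝕜 P} : ∀ x ∈ lieCore 𝕜 P M, x ∈ M := by
  intro x hx
  have h : (sSup {I : LieIdeal 𝕜 P | ∀ x ∈ I, x ∈ M}).toSubmodule ≤ M.toSubmodule := by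
    rw [LieSubmodule.sSup_toSubmodule]
    apply sSup_le
    rintro p ⟨I, hI, rfl⟩
    intro y hy
    exact hI y hy
  rw [lieCore] at hx
  exact h hx

lemma le_lieCore {M : LieSubalgebra 𝕜 P} {I : LieIdeal 𝕜 P} (h : ∀ x ∈ I, x ∈ M) :
    I ≤ lieCore 𝕜 P M := le_sSup h

lemma ker_le_lieCore {f : P →ₗ⁅𝕜⁆ Q} {M : LieSubalgebra 𝕜 P} (h : ∀ x, f x = 0 → x ∈ M) :
    f.ker ≤ lieCore 𝕜 P M :=
  le_lieCore fun x hx => h x (LieHom.mem_ker.mp hx)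

/-- The image of a nilpotent ideal is nilpotent. -/
lemma isNilpotent_map_of_surjective (f : P →ₗ⁅𝕜⁆ Q) (hf : Function.Surjective f)
    (I : LieIdeal 𝕜 P) (hI : LieRing.IsNilpotent I) :
    LieRing.IsNilpotent (LieIdeal.map f I) := by
  let g : I →ₗ⁅𝕜⁆ LieIdeal.map f I :=
    f.idealRestrict I (LieIdeal.map f I) fun x hx => LieIdeal.mem_map hx
  have hg : Function.Surjective g := by
    rintro ⟨y, hy⟩
    obtain ⟨x, hx⟩ := LieIdeal.mem_map_of_surjective hf hy
    exact ⟨x, Subtype.ext hx⟩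
  haveI := hI
  exact hg.lieAlgebra_isNilpotent

lemma map_lieNilradical_le (f : P →ₗ⁅𝕜⁆ Q) (hf : Function.Surjective f) :
    LieIdeal.map f (lieNilradical 𝕜 P) ≤ lieNilradical 𝕜 Q := by
  rw [lieNilradical, (LieIdeal.gc_map_comap f).l_sSup]
  apply iSup_le
  rintro I
  apply iSup_le
  rintro hI
  exact le_sSup (isNilpotent_map_of_surjective f hf I hI)

lemma map_lieNilradical_coe_le (f : P →ₗ⁅𝕜⁆ Q) (hf : Function.Surjective f) :
    ((lieNilradical 𝕜 P : LieSubalgebra 𝕜 P)).map f ≤ (lieNilradical 𝕜 Q : LieSubalgebra 𝕜 Q) := by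
  intro y hy
  rw [LieSubalgebra.mem_map] at hy
  obtain ⟨x, hx, rfl⟩ := hy
  have hx' : x ∈ lieNilradical 𝕜 P := hx
  have : f x ∈ LieIdeal.map f (lieNilradical 𝕜 P) := LieIdeal.mem_map hx'
  exact map_lieNilradical_le f hf this

/-- `comap f (map f M) = M` whenever the kernel of `f` is contained in `M`. -/
lemma comap_map_self (f : P →ₗ⁅𝕜⁆ Q) {M : LieSubalgebra 𝕜 P} (h : ∀ x, f x = 0 → x ∈ M) :
    (M.map f).comap f = M := by
  apply le_antisymm
  · intro x hx
    have : f x ∈ M.map f := hx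
    rw [LieSubalgebra.mem_map] at this
    obtain ⟨m, hm, hfm⟩ := this
    have : x - m ∈ M := h _ (by rw [map_sub f, hfm, sub_self])
    simpa using M.add_mem this hm
  · exact (LieSubalgebra.gc f).le_u_l M

lemma map_comap_self (f : P →ₗ⁅𝕜⁆ Q) (hf : Function.Surjective f) (X : LieSubalgebra 𝕜 Q) :
    (X.comap f).map f = X := by
  apply le_antisymm
  · exact (LieSubalgebra.gc f).l_u_le X
  · intro y hy
    obtain ⟨x, rfl⟩ := hf y
    exact (LieSubalgebra.mem_map _ _ _).mpr ⟨x, hy, rfl⟩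

lemma isCoatom_map (f : P →ₗ⁅𝕜⁆ Q) (hf : Function.Surjective f) {M : LieSubalgebra 𝕜 P}
    (hker : ∀ x, f x = 0 → x ∈ M) (h : IsCoatom M) : IsCoatom (M.map f) := by
  constructor
  · intro htop
    apply h.1
    rw [eq_top_iff]
    intro x _
    have : f x ∈ M.map f := by rw [htop]; trivial
    rw [LieSubalgebra.mem_map] at this
    obtain ⟨m, hm, hfm⟩ := this
    have : x - m ∈ M := hker _ (by rw [map_sub f, hfm, sub_self])
    simpa using M.add_mem this hm
  · intro X hX
    have h1 : M ≤ X.comap f := by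
      intro x hx
      exact hX.le ((LieSubalgebra.mem_map _ _ _).mpr ⟨x, hx, rfl⟩)
    have h2 : M ≠ X.comap f := by
      intro hEq
      apply hX.ne
      rw [hEq, map_comap_self f hf]
    have := h.2 (X.comap f) (lt_of_le_of_ne h1 h2)
    rw [← map_comap_self f hf X, this, LieSubalgebra.map_top' f hf]

end Aux2
section Aux3

variable {𝕜 : Type u} [Field 𝕜] {𝔉 : LieClass 𝕜}
variable {P : Type u} [LieRing P] [LieAlgebra 𝕜 P]
variable {Q : Type u} [LieRing Q] [LieAlgebra 𝕜 Q]

lemma fclass_of_equiv (h𝔉 : IsSaturatedFormation 𝕜 𝔉) (e : P ≃ₗ⁅𝕜⁆ Q) : 𝔉 P ↔ 𝔉 Q :=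
  ⟨h𝔉.iso_closed _ _ e, h𝔉.iso_closed _ _ e.symm⟩

/-- Core of image equals image of core, for a surjective morphism whose kernel lies in `M`. -/
lemma lieCore_map (f : P →ₗ⁅𝕜⁆ Q) (hf : Function.Surjective f) {M : LieSubalgebra 𝕜 P}
    (hker : ∀ x, f x = 0 → x ∈ M) :
    lieCore 𝕜 Q (M.map f) = LieIdeal.map f (lieCore 𝕜 P M) := by
  apply le_antisymm
  · set J := lieCore 𝕜 Q (M.map f) with hJ
    have h1 : ∀ x ∈ LieIdeal.comap f J, x ∈ M := by
      intro x hx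
      have : f x ∈ J := hx
      have hfx : f x ∈ M.map f := lieCore_le _ this
      rw [LieSubalgebra.mem_map] at hfx
      obtain ⟨m, hm, hfm⟩ := hfx
      have : x - m ∈ M := hker _ (by rw [map_sub f, hfm, sub_self])
      simpa using M.add_mem this hm
    have h2 : LieIdeal.comap f J ≤ lieCore 𝕜 P M := le_lieCore h1
    have h3 : J = LieIdeal.map f (LieIdeal.comap f J) := by
      rw [LieIdeal.map_comap_eq (J := J) (f.isIdealMorphism_of_surjective hf),
        f.idealRange_eq_top_of_surjective hf, top_inf_eq]
    rw [h3]
    exact LieIdeal.map_mono h2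
  · apply le_lieCore
    intro y hy
    have hcoe := LieIdeal.coe_map_of_surjective hf (I := lieCore 𝕜 P M)
    have : y ∈ (LieIdeal.map f (lieCore 𝕜 P M)).toSubmodule := hy
    rw [hcoe, Submodule.mem_map] at this
    obtain ⟨x, hx, rfl⟩ := this
    exact (LieSubalgebra.mem_map _ _ _).mpr ⟨x, lieCore_le x hx, rfl⟩

/-- Third isomorphism: `𝔉`-membership of the quotients by the cores transports along a
surjective morphism with kernel inside `M`. -/
lemma fclass_quot_core_iff (h𝔉 : IsSaturatedFormation 𝕜 𝔉) (f : P →ₗ⁅𝕜⁆ Q)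
    (hf : Function.Surjective f) {M : LieSubalgebra 𝕜 P} (hker : ∀ x, f x = 0 → x ∈ M) :
    𝔉 (Q ⧸ lieCore 𝕜 Q (M.map f)) ↔ 𝔉 (P ⧸ lieCore 𝕜 P M) := by
  set J := lieCore 𝕜 Q (M.map f) with hJdef
  set g : P →ₗ⁅𝕜⁆ Q ⧸ J := (lieQuotMk 𝕜 Q J).comp f with hg
  have hgs : Function.Surjective g := by
    intro y
    obtain ⟨q, rfl⟩ := lieQuotMk_surjective J y
    obtain ⟨p, rfl⟩ := hf q
    exact ⟨p, rfl⟩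
  have hkerg : g.ker = lieCore 𝕜 P M := by
    have hkc : f.ker ≤ lieCore 𝕜 P M := ker_le_lieCore hker
    ext x
    rw [LieHom.mem_ker]
    change lieQuotMk 𝕜 Q J (f x) = 0 ↔ _
    rw [lieQuotMk_eq_zero_iff, hJdef, lieCore_map f hf hker]
    constructor
    · intro hx
      have hcoe := LieIdeal.coe_map_of_surjective hf (I := lieCore 𝕜 P M)
      have : f x ∈ (LieIdeal.map f (lieCore 𝕜 P M)).toSubmodule := hx
      rw [hcoe, Submodule.mem_map] at this
      obtain ⟨c, hc, hfc⟩ := this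
      have hfc' : f c = f x := hfc
      have : x - c ∈ f.ker := by
        rw [LieHom.mem_ker, map_sub f, hfc', sub_self]
      have hxc : x - c ∈ lieCore 𝕜 P M := hkc this
      simpa using (lieCore 𝕜 P M).add_mem hxc hc
    · intro hx
      exact LieIdeal.mem_map hx
  have e : (P ⧸ g.ker) ≃ₗ⁅𝕜⁆ Q ⧸ J := g.quotKerEquivOfSurjective hgs
  rw [hkerg] at e
  exact (fclass_of_equiv h𝔉 e).symm

/-- `𝔉`-criticality is preserved under surjective images with kernels inside `M`. -/
lemma isFCritical_map (h𝔉 : IsSaturatedFormation 𝕜 𝔉) (f : P →ₗ⁅𝕜⁆ Q)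
    (hf : Function.Surjective f) {M : LieSubalgebra 𝕜 P} (hker : ∀ x, f x = 0 → x ∈ M)
    (h : IsFCritical 𝕜 P 𝔉 M) : IsFCritical 𝕜 Q 𝔉 (M.map f) := by
  obtain ⟨hco, hcore, hnil⟩ := h
  refine ⟨isCoatom_map f hf hker hco, ?_, ?_⟩
  · rw [fclass_quot_core_iff h𝔉 f hf hker]
    exact hcore
  · rw [eq_top_iff]
    intro y _
    obtain ⟨x, rfl⟩ := hf y
    have hx : x ∈ M ⊔ (lieNilradical 𝕜 P : LieSubalgebra 𝕜 P) := by rw [hnil]; trivial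
    rw [mem_sup_ideal] at hx
    obtain ⟨m, hm, z, hz, rfl⟩ := hx
    rw [map_add f]
    apply add_mem
    · exact le_sup_left (α := LieSubalgebra 𝕜 Q)
        ((LieSubalgebra.mem_map _ _ _).mpr ⟨m, hm, rfl⟩)
    · apply le_sup_right (α := LieSubalgebra 𝕜 Q)
      have : f z ∈ lieNilradical 𝕜 Q := map_lieNilradical_le f hf (LieIdeal.mem_map hz)
      exact this

/-- `𝔉`-membership passes to images of subalgebras. -/
lemma fclass_map (h𝔉 : IsSaturatedFormation 𝕜 𝔉) (f : P →ₗ⁅𝕜⁆ Q) {K : LieSubalgebra 𝕜 P}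
    (hK : 𝔉 K) : 𝔉 (K.map f) := by
  set g : K →ₗ⁅𝕜⁆ K.map f :=
    (f.comp K.incl).codRestrict' (K.map f)
      (fun x => (LieSubalgebra.mem_map _ _ _).mpr ⟨x, x.2, rfl⟩) with hg
  have hgs : Function.Surjective g := by
    rintro ⟨y, hy⟩
    rw [LieSubalgebra.mem_map] at hy
    obtain ⟨x, hx, rfl⟩ := hy
    exact ⟨⟨x, hx⟩, rfl⟩
  have h1 : 𝔉 (K ⧸ g.ker) := h𝔉.quotient_closed _ _ hK
  exact h𝔉.iso_closed _ _ (g.quotKerEquivOfSurjective hgs) h1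

end Aux3
section Aux4

variable {𝕜 : Type u} [Field 𝕜] {𝔉 : LieClass 𝕜}
variable {P : Type u} [LieRing P] [LieAlgebra 𝕜 P]
variable {Q : Type u} [LieRing Q] [LieAlgebra 𝕜 Q]

lemma chain_last_le {n : ℕ} (C : Fin (n + 1) → LieSubalgebra 𝕜 P)
    (hstep : ∀ i : Fin n, C i.succ ≤ C i.castSucc) : ∀ j, C (Fin.last n) ≤ C j := by
  intro j
  induction j using Fin.reverseInduction with
  | last => exact le_refl _
  | cast i ih => exact ih.trans (hstep i)

/-- `𝔉`-normalisers are preserved under surjective images whose kernel lies in the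
normaliser. -/
lemma isFNormaliser_map (h𝔉 : IsSaturatedFormation 𝕜 𝔉) (f : P →ₗ⁅𝕜⁆ Q)
    (hf : Function.Surjective f) {V : LieSubalgebra 𝕜 P} (hker : ∀ x, f x = 0 → x ∈ V)
    (h : IsFNormaliser 𝕜 P 𝔉 V) : IsFNormaliser 𝕜 Q 𝔉 (V.map f) := by
  obtain ⟨hFV, n, C, hC0, hClast, hCstep⟩ := h
  have hdesc : ∀ j, V ≤ C j := by
    intro j
    rw [← hClast]
    exact chain_last_le C (fun i => (hCstep i).1) j
  refine ⟨fclass_map h𝔉 f hFV, n, fun i => (C i).map f,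
    by show (C 0).map f = ⊤; rw [hC0, LieSubalgebra.map_top' f hf],
    by show (C (Fin.last n)).map f = V.map f; rw [hClast], ?_⟩
  intro i
  have hmono := (hCstep i).1
  refine ⟨(LieSubalgebra.gc f).monotone_l hmono, ?_⟩
  set K := C i.castSucc with hK
  set g : K →ₗ⁅𝕜⁆ K.map f :=
    (f.comp K.incl).codRestrict' (K.map f)
      (fun x => (LieSubalgebra.mem_map _ _ _).mpr ⟨x.1, x.2, rfl⟩) with hgdef
  have hgs : Function.Surjective g := by
    rintro ⟨y, hy⟩
    rw [LieSubalgebra.mem_map] at hy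
    obtain ⟨x, hx, rfl⟩ := hy
    exact ⟨⟨x, hx⟩, rfl⟩
  have hkerg : ∀ x, g x = 0 → x ∈ (C i.succ).comap K.incl := by
    intro x hx
    have hx0 : f x.1 = 0 := congrArg Subtype.val hx
    have hxV : x.1 ∈ V := hker _ hx0
    exact hdesc i.succ hxV
  have hcrit := isFCritical_map h𝔉 g hgs hkerg (hCstep i).2
  have heq : LieSubalgebra.map g ((C i.succ).comap K.incl)
      = ((C i.succ).map f).comap (K.map f).incl := by
    ext y
    rw [LieSubalgebra.mem_map]
    constructor
    · rintro ⟨x, hx, rfl⟩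
      exact (LieSubalgebra.mem_map _ _ _).mpr ⟨x.1, hx, rfl⟩
    · intro hy
      have : (y : Q) ∈ (C i.succ).map f := hy
      rw [LieSubalgebra.mem_map] at this
      obtain ⟨z, hz, hfz⟩ := this
      exact ⟨⟨z, hmono hz⟩, hz, Subtype.ext hfz⟩
  exact heq ▸ hcrit

end Aux4
section Aux5

variable {𝕜 : Type u} [Field 𝕜] {𝔉 : LieClass 𝕜}
variable {P : Type u} [LieRing P] [LieAlgebra 𝕜 P]
variable {Q : Type u} [LieRing Q] [LieAlgebra 𝕜 Q]

lemma map_incl_top (D : LieSubalgebra 𝕜 Q) :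
    (⊤ : LieSubalgebra 𝕜 D).map D.incl = D := by
  ext y
  rw [LieSubalgebra.mem_map]
  constructor
  · rintro ⟨x, -, rfl⟩
    exact x.2
  · intro hy
    exact ⟨⟨y, hy⟩, trivial, rfl⟩

lemma comap_incl_self' (K : LieSubalgebra 𝕜 Q) : K.comap K.incl = ⊤ := by
  ext x
  simp only [LieSubalgebra.mem_top, iff_true]
  exact x.2

/-- Prepending an `𝔉`-critical maximal subalgebra to an `𝔉`-normaliser chain. -/
lemma isFNormaliser_prepend (h𝔉 : IsSaturatedFormation 𝕜 𝔉) {D : LieSubalgebra 𝕜 Q}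
    (hD : IsFCritical 𝕜 Q 𝔉 D) {W : LieSubalgebra 𝕜 D} (hW : IsFNormaliser 𝕜 D 𝔉 W) :
    IsFNormaliser 𝕜 Q 𝔉 (W.map D.incl) := by
  obtain ⟨hFW, m, X, hX0, hXlast, hXstep⟩ := hW
  refine ⟨fclass_map h𝔉 D.incl hFW, m + 1,
    Fin.cases ⊤ (fun j => (X j).map D.incl), by simp, ?_, ?_⟩
  · simp only [show (Fin.last (m + 1)) = (Fin.last m).succ from (Fin.succ_last m).symm,
      Fin.cases_succ, hXlast]
  · intro i
    induction i using Fin.cases with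
    | zero =>
      simp only [Fin.castSucc_zero, Fin.cases_zero, Fin.cases_succ, hX0, map_incl_top]
      constructor
      · exact le_top
      · -- IsFCritical on ↥⊤ of D.comap ⊤.incl
        set f0 : Q →ₗ⁅𝕜⁆ (⊤ : LieSubalgebra 𝕜 Q) :=
          (LieHom.id : Q →ₗ⁅𝕜⁆ Q).codRestrict' ⊤ (fun _ => trivial) with hf0
        have hf0s : Function.Surjective f0 := fun y => ⟨y.1, Subtype.ext rfl⟩
        have hker0 : ∀ x : Q, f0 x = 0 → x ∈ D := by
          intro x hx
          have : x = 0 := congrArg Subtype.val hx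
          rw [this]
          exact D.zero_mem
        have hcrit := isFCritical_map h𝔉 f0 hf0s hker0 hD
        have heq : D.map f0 = D.comap (⊤ : LieSubalgebra 𝕜 Q).incl := by
          ext y
          rw [LieSubalgebra.mem_map]
          constructor
          · rintro ⟨x, hx, rfl⟩
            exact hx
          · intro hy
            exact ⟨y.1, hy, Subtype.ext rfl⟩
        exact heq ▸ hcrit
    | succ j =>
      have hc1 : (j.succ).castSucc = (j.castSucc).succ := (Fin.succ_castSucc j).symm
      simp only [hc1, Fin.cases_succ]
      have hmono := (hXstep j).1
      constructor
      · exact (LieSubalgebra.gc D.incl).monotone_l hmono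
      · set K := X j.castSucc with hK
        set g : K →ₗ⁅𝕜⁆ (K.map D.incl) :=
          (D.incl.comp K.incl).codRestrict' (K.map D.incl)
            (fun x => (LieSubalgebra.mem_map _ _ _).mpr ⟨x.1, x.2, rfl⟩) with hgdef
        have hgs : Function.Surjective g := by
          rintro ⟨y, hy⟩
          rw [LieSubalgebra.mem_map] at hy
          obtain ⟨x, hx, rfl⟩ := hy
          exact ⟨⟨x, hx⟩, rfl⟩
        have hkerg : ∀ x, g x = 0 → x ∈ (X j.succ).comap K.incl := by
          intro x hx
          have hx0 : (x.1 : Q) = 0 := congrArg Subtype.val hx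
          have : (x.1 : D) = 0 := Subtype.ext hx0
          have hx1 : x = 0 := Subtype.ext this
          rw [hx1]
          exact ((X j.succ).comap K.incl).zero_mem
        have hcrit := isFCritical_map h𝔉 g hgs hkerg (hXstep j).2
        have heq : LieSubalgebra.map g ((X j.succ).comap K.incl)
            = ((X j.succ).map D.incl).comap (K.map D.incl).incl := by
          ext y
          rw [LieSubalgebra.mem_map]
          constructor
          · rintro ⟨x, hx, rfl⟩
            exact (LieSubalgebra.mem_map _ _ _).mpr ⟨x.1, hx, rfl⟩
          · intro hy
            have : (y : Q) ∈ (X j.succ).map D.incl := hy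
            rw [LieSubalgebra.mem_map] at this
            obtain ⟨z, hz, hfz⟩ := this
            exact ⟨⟨z, hmono hz⟩, hz, Subtype.ext hfz⟩
        exact heq ▸ hcrit

end Aux5
section Aux6

variable {𝕜 : Type u} [Field 𝕜] {𝔉 : LieClass 𝕜}
variable {P : Type u} [LieRing P] [LieAlgebra 𝕜 P]

lemma chain_antitone {n : ℕ} (C : Fin (n + 1) → LieSubalgebra 𝕜 P)
    (hstep : ∀ i : Fin n, C i.succ ≤ C i.castSucc) :
    ∀ a b : Fin (n + 1), a ≤ b → C b ≤ C a := by
  intro a b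
  induction b using Fin.induction with
  | zero =>
    intro hab
    have : a = 0 := le_antisymm hab (Fin.zero_le a)
    rw [this]
  | succ i ih =>
    intro hab
    by_cases hc : a ≤ i.castSucc
    · exact (hstep i).trans (ih hc)
    · have : a = i.succ := by
        have h1 : a.val ≤ i.val + 1 := hab
        have h2 : ¬ a.val ≤ i.val := hc
        apply Fin.ext
        simp only [Fin.val_succ]
        omega
      rw [this]

lemma main_aux (h𝔉 : IsSaturatedFormation 𝕜 𝔉) :
    ∀ (n : ℕ) (L : Type u) [LieRing L] [LieAlgebra 𝕜 L] (U : LieSubalgebra 𝕜 L),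
      𝔉 U → ∀ C : Fin (n + 1) → LieSubalgebra 𝕜 L, C 0 = ⊤ → C (Fin.last n) = U →
      (∀ i : Fin n, C i.succ ≤ C i.castSucc ∧
        IsFCritical 𝕜 (C i.castSucc) 𝔉 ((C i.succ).comap (C i.castSucc).incl)) →
      ∀ A : LieIdeal 𝕜 L, IsFNormaliser 𝕜 (L ⧸ A) 𝔉 (U.map (lieQuotMk 𝕜 L A)) := by
  intro n
  induction n with
  | zero =>
    intro L _ _ U hFU C hC0 hClast hCstep A
    have hU : U = ⊤ := by rw [← hClast, show Fin.last 0 = 0 from rfl, hC0]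
    refine ⟨fclass_map h𝔉 _ hFU, 0, fun _ => U.map (lieQuotMk 𝕜 L A), ?_, rfl, fun i => i.elim0⟩
    rw [hU, LieSubalgebra.map_top' _ (lieQuotMk_surjective A)]
  | succ n IH =>
    intro L _ _ U hFU C hC0 hClast hCstep A
    set π := lieQuotMk 𝕜 L A with hπ
    have hπs : Function.Surjective π := lieQuotMk_surjective A
    have hdesc := chain_antitone C (fun i => (hCstep i).1)
    set i0 : Fin (n + 1) := 0 with hi0
    set M := C i0.succ with hM
    have hCc0 : C i0.castSucc = ⊤ := by rw [Fin.castSucc_zero, hC0]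
    have hMle : M ≤ C i0.castSucc := (hCstep i0).1
    -- U ≤ M and C j ≤ M for j ≥ 1
    have hUM : U ≤ M := by
      rw [← hClast]
      exact hdesc i0.succ (Fin.last (n + 1)) (Fin.le_last _)
    -- absolute criticality of M in L
    have hMc : IsFCritical 𝕜 L 𝔉 M := by
      have hsurj : Function.Surjective (C i0.castSucc).incl := by
        intro y
        exact ⟨⟨y, by rw [hCc0]; trivial⟩, rfl⟩
      have hker : ∀ x, (C i0.castSucc).incl x = 0 → x ∈ M.comap (C i0.castSucc).incl := by
        intro x hx
        have : x = 0 := Subtype.ext hx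
        rw [this]
        exact (M.comap (C i0.castSucc).incl).zero_mem
      have h1 := isFCritical_map h𝔉 _ hsurj hker (hCstep i0).2
      have heq : (M.comap (C i0.castSucc).incl).map (C i0.castSucc).incl = M := by
        ext y
        rw [LieSubalgebra.mem_map]
        constructor
        · rintro ⟨x, hx, rfl⟩
          exact hx
        · intro hy
          exact ⟨⟨y, hMle hy⟩, hy, rfl⟩
      exact heq ▸ h1
    -- the tail chain inside M
    set U' : LieSubalgebra 𝕜 M := U.comap M.incl with hU'
    set C' : Fin (n + 1) → LieSubalgebra 𝕜 M := fun j => (C j.succ).comap M.incl with hC'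
    have hC'0 : C' 0 = ⊤ := comap_incl_self' M
    have hC'last : C' (Fin.last n) = U' := by
      show (C (Fin.last n).succ).comap M.incl = U.comap M.incl
      rw [Fin.succ_last, hClast]
    have hC'step : ∀ j : Fin n, C' j.succ ≤ C' j.castSucc ∧
        IsFCritical 𝕜 (C' j.castSucc) 𝔉 ((C' j.succ).comap (C' j.castSucc).incl) := by
      intro j
      set i : Fin (n + 1) := j.succ with hi
      have hcast : C' j.castSucc = (C i.castSucc).comap M.incl := by
        show (C (j.castSucc).succ).comap M.incl = _
        rw [Fin.succ_castSucc]
      have hsuccj : C' j.succ = (C i.succ).comap M.incl := rfl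
      have hle : C i.castSucc ≤ M := by
        apply hdesc i0.succ i.castSucc
        rw [Fin.le_def]
        simp only [hi0, hi, Fin.val_succ, Fin.coe_castSucc, Fin.val_zero]
        omega
      have hmono := (hCstep i).1
      constructor
      · rw [hcast, hsuccj]
        intro x hx
        exact hmono hx
      · set g : C i.castSucc →ₗ⁅𝕜⁆ C' j.castSucc :=
          (LieSubalgebra.inclusion hle).codRestrict' (C' j.castSucc)
            (fun x => by
              rw [hcast]
              exact x.2) with hg
        have hgs : Function.Surjective g := by
          rintro ⟨y, hy⟩
          rw [hcast] at hy
          exact ⟨⟨y.1, hy⟩, Subtype.ext (Subtype.ext rfl)⟩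
        have hkerg : ∀ x, g x = 0 → x ∈ (C i.succ).comap (C i.castSucc).incl := by
          intro x hx
          have : x = 0 := Subtype.ext
            (show (x : L) = 0 from congrArg (fun z : C' j.castSucc => ((z : M) : L)) hx)
          rw [this]
          exact ((C i.succ).comap (C i.castSucc).incl).zero_mem
        have hcrit := isFCritical_map h𝔉 g hgs hkerg (hCstep i).2
        have heq : LieSubalgebra.map g ((C i.succ).comap (C i.castSucc).incl)
            = ((C' j.succ).comap (C' j.castSucc).incl) := by
          ext y
          rw [LieSubalgebra.mem_map]
          constructor
          · rintro ⟨x, hx, rfl⟩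
            exact hx
          · intro hy
            have hy1 : ((y : M) : L) ∈ C i.succ := hy
            have hmem : (y : M) ∈ LieSubalgebra.comap M.incl (C i.castSucc) := by
              rw [← hcast]
              exact y.2
            exact ⟨⟨(y : M), hmem⟩, hy1, Subtype.ext (Subtype.ext rfl)⟩
        exact heq ▸ hcrit
    -- 𝔉-membership of U'
    have hFU' : 𝔉 U' := by
      set g' : U →ₗ⁅𝕜⁆ U' :=
        (LieSubalgebra.inclusion hUM).codRestrict' U' (fun x => x.2) with hg'
      have hbij : Function.Bijective g' := by
        constructor
        · intro x y hxy
          exact Subtype.ext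
            (show (x : L) = (y : L) from congrArg (fun z : U' => ((z : M) : L)) hxy)
        · rintro ⟨y, hy⟩
          exact ⟨⟨y.1, hy⟩, Subtype.ext (Subtype.ext rfl)⟩
      exact h𝔉.iso_closed _ _ (LieEquiv.ofBijective g' hbij) hFU
    -- key step: image of U' under any surjective morphism from M is an 𝔉-normaliser
    have key : ∀ (T : Type u) (_ : LieRing T) (_ : LieAlgebra 𝕜 T) (g : M →ₗ⁅𝕜⁆ T),
        Function.Surjective g → IsFNormaliser 𝕜 T 𝔉 (U'.map g) := by
      intro T _ _ g hg
      have h1 := IH M U' hFU' C' hC'0 hC'last hC'step g.ker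
      set e := g.quotKerEquivOfSurjective hg with he
      have hes : Function.Surjective e.toLieHom := e.surjective
      have hkere : ∀ x, e.toLieHom x = 0 →
          x ∈ U'.map (lieQuotMk 𝕜 M g.ker) := by
        intro x hx
        have hx' : e x = 0 := hx
        have hz : e.symm 0 = 0 := e.symm.toLieHom.map_zero
        have : x = 0 := by
          have h2 := congrArg e.symm hx'
          rw [e.symm_apply_apply, hz] at h2
          exact h2
        rw [this]
        exact (U'.map (lieQuotMk 𝕜 M g.ker)).zero_mem
      have h2 := isFNormaliser_map h𝔉 e.toLieHom hes hkere h1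
      have heq : LieSubalgebra.map e.toLieHom (U'.map (lieQuotMk 𝕜 M g.ker))
          = U'.map g := by
        ext y
        rw [LieSubalgebra.mem_map]
        constructor
        · rintro ⟨q, hq, rfl⟩
          rw [LieSubalgebra.mem_map] at hq
          obtain ⟨u, hu, rfl⟩ := hq
          refine (LieSubalgebra.mem_map _ _ _).mpr ⟨u, hu, ?_⟩
          exact g.quotKerEquivOfSurjective_mk hg u
        · intro hy
          rw [LieSubalgebra.mem_map] at hy
          obtain ⟨u, hu, rfl⟩ := hy
          refine ⟨lieQuotMk 𝕜 M g.ker u, (LieSubalgebra.mem_map _ _ _).mpr ⟨u, hu, rfl⟩, ?_⟩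
          exact g.quotKerEquivOfSurjective_mk hg u
      exact heq ▸ h2
    by_cases hMA : M ⊔ (A : LieSubalgebra 𝕜 L) = ⊤
    · -- M + A = L: use the second isomorphism theorem
      set g1 : M →ₗ⁅𝕜⁆ L ⧸ A := π.comp M.incl with hg1
      have hg1s : Function.Surjective g1 := by
        intro y
        obtain ⟨x, rfl⟩ := hπs y
        have hx : x ∈ M ⊔ (A : LieSubalgebra 𝕜 L) := by rw [hMA]; trivial
        rw [mem_sup_ideal] at hx
        obtain ⟨m, hm, a, ha, rfl⟩ := hx
        refine ⟨⟨m, hm⟩, ?_⟩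
        show π m = π (m + a)
        have h0 : π a = 0 := (lieQuotMk_eq_zero_iff A a).mpr ha
        rw [map_add π, h0, add_zero]
      have h3 := key (L ⧸ A) _ _ g1 hg1s
      have heq : U'.map g1 = U.map π := by
        ext y
        rw [LieSubalgebra.mem_map, LieSubalgebra.mem_map]
        constructor
        · rintro ⟨u, hu, rfl⟩
          exact ⟨u.1, hu, rfl⟩
        · rintro ⟨u, hu, rfl⟩
          exact ⟨⟨u, hUM hu⟩, hu, rfl⟩
      exact heq ▸ h3
    · -- A ≤ M
      have hAM : (A : LieSubalgebra 𝕜 L) ≤ M := by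
        have hMsup : M ⊔ (A : LieSubalgebra 𝕜 L) = M := by
          rcases lt_or_eq_of_le (le_sup_left : M ≤ M ⊔ (A : LieSubalgebra 𝕜 L)) with hlt | hEq
          · exact absurd (hMc.1.2 _ hlt) hMA
          · exact hEq.symm
        rw [← hMsup]
        exact le_sup_right
      have hkerπ : ∀ x, π x = 0 → x ∈ M := by
        intro x hx
        exact hAM ((lieQuotMk_eq_zero_iff A x).mp hx)
      have hDcrit : IsFCritical 𝕜 (L ⧸ A) 𝔉 (M.map π) := isFCritical_map h𝔉 π hπs hkerπ hMc
      set g2 : M →ₗ⁅𝕜⁆ M.map π :=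
        (π.comp M.incl).codRestrict' (M.map π)
          (fun x => (LieSubalgebra.mem_map _ _ _).mpr ⟨x.1, x.2, rfl⟩) with hg2
      have hg2s : Function.Surjective g2 := by
        rintro ⟨y, hy⟩
        rw [LieSubalgebra.mem_map] at hy
        obtain ⟨x, hx, rfl⟩ := hy
        exact ⟨⟨x, hx⟩, rfl⟩
      have hW := key (M.map π) _ _ g2 hg2s
      have hpre := isFNormaliser_prepend h𝔉 hDcrit hW
      have heq : (LieSubalgebra.map g2 U').map (M.map π).incl = U.map π := by
        ext y
        rw [LieSubalgebra.mem_map, LieSubalgebra.mem_map]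
        constructor
        · rintro ⟨w, hw, rfl⟩
          rw [LieSubalgebra.mem_map] at hw
          obtain ⟨u, hu, rfl⟩ := hw
          exact ⟨u.1, hu, rfl⟩
        · rintro ⟨u, hu, rfl⟩
          refine ⟨g2 ⟨u, hUM hu⟩, ?_, rfl⟩
          exact (LieSubalgebra.mem_map _ _ _).mpr ⟨⟨u, hUM hu⟩, hu, rfl⟩
      exact heq ▸ hpre

end Aux6
/-- If `U` is an `𝔉`-normaliser of the soluble Lie algebra `L` and `A` is an ideal of `L`,
then `(U + A)/A` is an `𝔉`-normaliser of `L ⧸ A`. -/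
theorem fnormaliser_quotient
    (𝕜 : Type u) [Field 𝕜] (𝔉 : LieClass 𝕜) (h𝔉 : IsSaturatedFormation 𝕜 𝔉)
    (L : Type u) [LieRing L] [LieAlgebra 𝕜 L] [FiniteDimensional 𝕜 L]
    [LieAlgebra.IsSolvable L] (U : LieSubalgebra 𝕜 L) (hU : IsFNormaliser 𝕜 L 𝔉 U)
    (A : LieIdeal 𝕜 L) :
    IsFNormaliser 𝕜 (L ⧸ A) 𝔉
      ((U ⊔ (A : LieSubalgebra 𝕜 L)).map (lieQuotMk 𝕜 L A)) := by
  obtain ⟨hFU, n, C, hC0, hClast, hCstep⟩ := hU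
  have h2 : (U ⊔ (A : LieSubalgebra 𝕜 L)).map (lieQuotMk 𝕜 L A) = U.map (lieQuotMk 𝕜 L A) :=
    map_sup_ideal_ker _ A (fun x hx => (lieQuotMk_eq_zero_iff A x).mpr hx) U
  rw [h2]
  exact main_aux h𝔉 n L U hFU C hC0 hClast hCstep A
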